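/- arXiv:1607.08641 — 9 statements merged into one kernel-verified Lean document; each statement's English description precedes it below -/
import Mathlib

section
/- Let H be a non-trivial hypergraph on n vertices and let k be the size of the largest edge in H. Then the infection number of H is at most n - k + 1. -/
/-- A (finite) hypergraph: a vertex set and a set of edges, each edge a subset
of the vertex set. -/
structure FinHypergraph (α : Type*) [DecidableEq α] where
  verts : Finset α
  edges : Finset (Finset α)
  edge_sub : ∀ e ∈ edges, e ⊆ verts

namespace FinHypergraph

variable {α : Type*} [DecidableEq α]

/-- The `m`-infection closure of an initially infected set `W`: a set `A` of
infected vertices with `m ≤ |A|` can infect an edge `E ⊇ A` provided every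
vertex `u` outside `E` such that `A ∪ {u}` is contained in some edge is
already infected; then every vertex of `E` becomes infected. -/
inductive InfectedFromM (H : FinHypergraph α) (m : ℕ) (W : Finset α) : α → Prop
  | init {v : α} (hv : v ∈ W) : InfectedFromM H m W v
  | spread {A E : Finset α} {v : α}
      (hcard : m ≤ A.card) (hAE : A ⊆ E) (hE : E ∈ H.edges)
      (hAinf : ∀ a ∈ A, InfectedFromM H m W a)
      (hblock : ∀ u ∈ H.verts, u ∉ E → (∃ E' ∈ H.edges, A ∪ {u} ⊆ E') →
        InfectedFromM H m W u)
      (hv : v ∈ E) : InfectedFromM H m W v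

/-- `W` is an `m`-infection set if starting from `W` every vertex gets infected. -/
def IsInfectionSetM (H : FinHypergraph α) (m : ℕ) (W : Finset α) : Prop :=
  W ⊆ H.verts ∧ ∀ v ∈ H.verts, InfectedFromM H m W v

/-- The `m`-infection number: minimum size of an `m`-infection set. -/
noncomputable def infectionNumberM (H : FinHypergraph α) (m : ℕ) : ℕ :=
  sInf {n | ∃ W : Finset α, IsInfectionSetM H m W ∧ W.card = n}

/-- Ordinary infection (`m = 1`, i.e. the infecting set is nonempty). -/
def InfectedFrom (H : FinHypergraph α) : Finset α → α → Prop := InfectedFromM H 1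

def IsInfectionSet (H : FinHypergraph α) : Finset α → Prop := IsInfectionSetM H 1

noncomputable def infectionNumber (H : FinHypergraph α) : ℕ := infectionNumberM H 1

/-- The degree of a vertex: the number of edges containing it. -/
def degree (H : FinHypergraph α) (v : α) : ℕ := (H.edges.filter (fun e => v ∈ e)).card

/-- Two vertices are adjacent if some edge contains both. -/
def Adj (H : FinHypergraph α) (u v : α) : Prop := ∃ e ∈ H.edges, u ∈ e ∧ v ∈ e

/-- A hypergraph is connected if any two vertices are joined by a chain of
adjacencies. -/
def Connected (H : FinHypergraph α) : Prop :=
  ∀ u ∈ H.verts, ∀ v ∈ H.verts, Relation.ReflTransGen H.Adj u v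

/-- A hypergraph is reduced if no edge is contained in another edge. -/
def Reduced (H : FinHypergraph α) : Prop :=
  ∀ e ∈ H.edges, ∀ f ∈ H.edges, e ⊆ f → e = f

open Classical in
/-- The connected component of a vertex. -/
noncomputable def component (H : FinHypergraph α) (v : α) : Finset α :=
  H.verts.filter (fun u => Relation.ReflTransGen H.Adj v u)

/-- The sub-hypergraph induced by a vertex set `S`. -/
def restrict (H : FinHypergraph α) (S : Finset α) : FinHypergraph α where
  verts := H.verts ∩ S
  edges := H.edges.filter (fun e => e ⊆ S)
  edge_sub := fun e he => by
    simp only [Finset.mem_filter] at he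
    exact Finset.subset_inter (H.edge_sub e he.1) he.2

end FinHypergraph

/-- For a non-trivial hypergraph `H` on `n` vertices whose largest
edge has size `k`, the infection number is at most `n - k + 1`. -/
theorem infectionNumber_le_card_sub_maxEdge_add_one
    {α : Type*} [DecidableEq α] (H : FinHypergraph α) (n k : ℕ)
    (hn : H.verts.card = n)
    (hnontriv : H.edges.Nonempty)
    (hedge_ne : ∀ e ∈ H.edges, e.Nonempty)
    (hmax : ∃ e ∈ H.edges, e.card = k)
    (hmax' : ∀ e ∈ H.edges, e.card ≤ k) :
    H.infectionNumber ≤ n - k + 1 := by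
  obtain ⟨e, he, hek⟩ := hmax
  obtain ⟨x, hx⟩ := hedge_ne e he
  have hsub : e ⊆ H.verts := H.edge_sub e he
  set W : Finset α := insert x (H.verts \ e) with hW
  have hWsub : W ⊆ H.verts := by
    intro a ha
    rcases Finset.mem_insert.mp ha with h | h
    · exact hsub (h ▸ hx)
    · exact (Finset.mem_sdiff.mp h).1
  have hinf : ∀ v ∈ H.verts, FinHypergraph.InfectedFromM H 1 W v := by
    intro v hv
    by_cases hve : v ∈ e
    · refine FinHypergraph.InfectedFromM.spread (A := {x}) (E := e) ?_ ?_ he ?_ ?_ hve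
      · simp
      · simpa using hx
      · intro a ha
        simp only [Finset.mem_singleton] at ha
        exact FinHypergraph.InfectedFromM.init (by simp [hW, ha])
      · intro u hu hue _
        exact FinHypergraph.InfectedFromM.init
          (Finset.mem_insert.mpr (Or.inr (Finset.mem_sdiff.mpr ⟨hu, hue⟩)))
    · exact FinHypergraph.InfectedFromM.init
        (Finset.mem_insert.mpr (Or.inr (Finset.mem_sdiff.mpr ⟨hv, hve⟩)))
  have hcard : W.card = n - k + 1 := by
    rw [hW, Finset.card_insert_of_notMem (by simp [hx]),
      Finset.card_sdiff_of_subset hsub, hn, hek]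
  exact Nat.sInf_le ⟨W, ⟨hWsub, hinf⟩, hcard⟩
end

section
/- Let H be a hypergraph and let E1, E2 be edges of H with E1 a proper subset of E2. Then I(H) = I(H \ E1), where H \ E1 is the hypergraph obtained from H by deleting the edge E1 (keeping all vertices). Moreover, any infection set for H is an infection set for H \ E1 and vice versa. -/
/-- The hypergraph obtained by deleting the edge `E` (keeping all vertices). -/
def FinHypergraph.delEdge {α : Type*} [DecidableEq α] (H : FinHypergraph α) (E : Finset α) :
    FinHypergraph α :=
  ⟨H.verts, H.edges.erase E, fun e he => H.edge_sub e (Finset.mem_of_mem_erase he)⟩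

/-- Deleting an edge that is properly contained in another edge
does not change the infection number, and the infection sets of the two
hypergraphs coincide. -/
theorem infectionNumber_delEdge_of_subedge
    {α : Type*} [DecidableEq α] (H : FinHypergraph α) (E1 E2 : Finset α)
    (h1 : E1 ∈ H.edges) (h2 : E2 ∈ H.edges) (hss : E1 ⊂ E2) :
    H.infectionNumber = (H.delEdge E1).infectionNumber ∧
      ∀ W : Finset α, H.IsInfectionSet W ↔ (H.delEdge E1).IsInfectionSet W := by
  have key : ∀ (W : Finset α) (v : α),
      FinHypergraph.InfectedFromM H 1 W v ↔ FinHypergraph.InfectedFromM (H.delEdge E1) 1 W v := by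
    intro W v
    constructor
    · intro h
      induction h with
      | init hv => exact .init hv
      | @spread A E v hcard hAE hE hAinf hblock hv ihA ihB =>
        by_cases hEE : E = E1
        · subst hEE
          refine .spread hcard (hAE.trans hss.subset)
            (Finset.mem_erase.mpr ⟨hss.ne', h2⟩) ihA ?_ (hss.subset hv)
          intro u hu huE hex
          obtain ⟨E', hE', hsub⟩ := hex
          exact ihB u hu (fun h => huE (hss.subset h))
            ⟨E', Finset.mem_of_mem_erase hE', hsub⟩
        · refine .spread hcard hAE (Finset.mem_erase.mpr ⟨hEE, hE⟩) ihA ?_ hv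
          intro u hu huE hex
          obtain ⟨E', hE', hsub⟩ := hex
          exact ihB u hu huE ⟨E', Finset.mem_of_mem_erase hE', hsub⟩
    · intro h
      induction h with
      | init hv => exact .init hv
      | @spread A E v hcard hAE hE hAinf hblock hv ihA ihB =>
        refine .spread hcard hAE (Finset.mem_of_mem_erase hE) ihA ?_ hv
        intro u hu huE hex
        obtain ⟨E', hE', hsub⟩ := hex
        by_cases hE'1 : E' = E1
        · subst hE'1
          exact ihB u hu huE ⟨E2, Finset.mem_erase.mpr ⟨hss.ne', h2⟩, hsub.trans hss.subset⟩
        · exact ihB u hu huE ⟨E', Finset.mem_erase.mpr ⟨hE'1, hE'⟩, hsub⟩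
  have hsets : ∀ W : Finset α, H.IsInfectionSet W ↔ (H.delEdge E1).IsInfectionSet W := by
    intro W
    constructor
    · rintro ⟨hW, hall⟩
      exact ⟨hW, fun v hv => (key W v).mp (hall v hv)⟩
    · rintro ⟨hW, hall⟩
      exact ⟨hW, fun v hv => (key W v).mpr (hall v hv)⟩
  refine ⟨?_, hsets⟩
  unfold FinHypergraph.infectionNumber FinHypergraph.infectionNumberM
  congr 1
  ext n
  constructor
  · rintro ⟨W, hW, rfl⟩; exact ⟨W, (hsets W).mp hW, rfl⟩
  · rintro ⟨W, hW, rfl⟩; exact ⟨W, (hsets W).mpr hW, rfl⟩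
end

section
/- For integers 1 ≤ k ≤ n, the infection number of the complete k-uniform hypergraph on n vertices equals n - k + 1. -/
/-- The complete `k`-uniform hypergraph on `n` vertices. -/
def completeUniform (n k : ℕ) : FinHypergraph (Fin n) :=
  ⟨Finset.univ, Finset.univ.powersetCard k, fun e _ => Finset.subset_univ e⟩

lemma completeUniform_mem_edges {n k : ℕ} {E : Finset (Fin n)} :
    E ∈ (completeUniform n k).edges ↔ E.card = k := by
  simp [completeUniform, Finset.mem_powersetCard_univ]

/-- Lower bound: with too small `W`, nothing new gets infected. -/
lemma infected_mem_of_small {n k : ℕ} (h1 : 1 ≤ k) (h2 : k ≤ n)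
    {W : Finset (Fin n)} (hW : W.card + k ≤ n) {v : Fin n}
    (hv : (completeUniform n k).InfectedFromM 1 W v) : v ∈ W := by
  induction hv with
  | init h => exact h
  | @spread A E v hcard hAE hE hAinf hblock hvE ihA ihB =>
    rw [completeUniform_mem_edges] at hE
    have hAle : A.card ≤ k := hE ▸ Finset.card_le_card hAE
    rcases eq_or_lt_of_le hAle with heq | hlt
    · have hAeqE : A = E := Finset.eq_of_subset_of_card_le hAE (by omega)
      exact ihA v (hAeqE ▸ hvE)
    · exfalso
      have hsub : Eᶜ ⊆ W := by
        intro u hu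
        rw [Finset.mem_compl] at hu
        refine ihB u (Finset.mem_univ u) hu ?_
        have hc : (A ∪ {u}).card ≤ k := le_trans
          (le_trans (Finset.card_union_le _ _) (by simp)) hlt
        obtain ⟨E', hAE', hE'univ, hE'card⟩ :=
          Finset.exists_subsuperset_card_eq (Finset.subset_univ (A ∪ {u})) hc
            (by simpa using h2)
        exact ⟨E', completeUniform_mem_edges.mpr hE'card, hAE'⟩
      have hccard : Eᶜ.card = n - k := by
        rw [Finset.card_compl, hE]; simp
      have hWE : Eᶜ = W := Finset.eq_of_subset_of_card_le hsub (by omega)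
      have hA : A.Nonempty := Finset.card_pos.mp (by omega)
      obtain ⟨a, ha⟩ := hA
      have := ihA a ha
      rw [← hWE, Finset.mem_compl] at this
      exact this (hAE ha)

/-- For `1 ≤ k ≤ n`, the infection number of the complete
`k`-uniform hypergraph on `n` vertices is `n - k + 1`. -/
theorem infectionNumber_completeUniform (n k : ℕ) (h1 : 1 ≤ k) (h2 : k ≤ n) :
    (completeUniform n k).infectionNumber = n - k + 1 := by
  classical
  have hn : 0 < n := lt_of_lt_of_le h1 h2
  -- the witness edge and set
  set E₀ : Finset (Fin n) := (Finset.range k).attachFin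
    (fun m hm => lt_of_lt_of_le (Finset.mem_range.mp hm) h2) with hE₀def
  have hE₀card : E₀.card = k := by
    rw [hE₀def, Finset.card_attachFin, Finset.card_range]
  have hmemE₀ : ∀ i : Fin n, i ∈ E₀ ↔ (i : ℕ) < k := by
    intro i; simp [hE₀def, Finset.mem_attachFin]
  set v₀ : Fin n := ⟨0, hn⟩ with hv₀def
  have hv₀E₀ : v₀ ∈ E₀ := (hmemE₀ v₀).mpr (by show (0:ℕ) < k; omega)
  set W : Finset (Fin n) := E₀ᶜ ∪ {v₀} with hWdef
  have hWcard : W.card = n - k + 1 := by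
    rw [hWdef, Finset.card_union_of_disjoint (by
      simp [Finset.disjoint_singleton_right, hv₀E₀])]
    rw [Finset.card_compl, hE₀card]; simp
  have hWinf : (completeUniform n k).IsInfectionSetM 1 W := by
    refine ⟨Finset.subset_univ _, fun v _ => ?_⟩
    by_cases hvW : v ∈ W
    · exact FinHypergraph.InfectedFromM.init hvW
    · have hvE : v ∈ E₀ := by
        by_contra h
        exact hvW (Finset.mem_union_left _ (Finset.mem_compl.mpr h))
      refine FinHypergraph.InfectedFromM.spread (A := {v₀}) (E := E₀)
        (by simp) (Finset.singleton_subset_iff.mpr hv₀E₀)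
        (completeUniform_mem_edges.mpr hE₀card) ?_ ?_ hvE
      · intro a ha
        rw [Finset.mem_singleton] at ha
        exact FinHypergraph.InfectedFromM.init (by
          rw [ha]; exact Finset.mem_union_right _ (Finset.mem_singleton_self _))
      · intro u _ huE _
        exact FinHypergraph.InfectedFromM.init
          (Finset.mem_union_left _ (Finset.mem_compl.mpr huE))
  have hmem : n - k + 1 ∈ {m | ∃ W : Finset (Fin n),
      (completeUniform n k).IsInfectionSetM 1 W ∧ W.card = m} :=
    ⟨W, hWinf, hWcard⟩
  have hlb : ∀ m ∈ {m | ∃ W : Finset (Fin n),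
      (completeUniform n k).IsInfectionSetM 1 W ∧ W.card = m}, n - k + 1 ≤ m := by
    rintro m ⟨W', hW', rfl⟩
    by_contra hlt
    push_neg at hlt
    have hsmall : W'.card + k ≤ n := by omega
    have : (Finset.univ : Finset (Fin n)) ⊆ W' := fun v _ =>
      infected_mem_of_small h1 h2 hsmall (hW'.2 v (Finset.mem_univ v))
    have := Finset.card_le_card this
    simp at this
    omega
  refine le_antisymm (Nat.sInf_le hmem) ?_
  exact hlb _ (Nat.sInf_mem ⟨_, hmem⟩)
end

section
/- Let 2 ≤ k ≤ n and let H be the k-uniform hypergraph on vertex set {1,...,n} whose edges are all sets F ∪ {n} where F is a (k−1)-subset of {1,...,n−1}. If n ≥ 2k−1 then I(H) = n−k; otherwise I(H) = n−k+1. -/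
/-- The `k`-uniform hypergraph on `{1, …, n}` whose edges are the sets
`F ∪ {n}` with `F` a `(k-1)`-subset of `{1, …, n-1}`. -/
def coneHypergraph (n k : ℕ) (hn : 1 ≤ n) : FinHypergraph ℕ where
  verts := Finset.Icc 1 n
  edges := ((Finset.Icc 1 (n - 1)).powersetCard (k - 1)).image (fun F => insert n F)
  edge_sub := by
    intro e he
    simp only [Finset.mem_image, Finset.mem_powersetCard] at he
    obtain ⟨F, ⟨hF, _⟩, rfl⟩ := he
    intro x hx
    rcases Finset.mem_insert.mp hx with rfl | hxF
    · exact Finset.mem_Icc.mpr ⟨hn, le_rfl⟩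
    · exact Finset.Icc_subset_Icc_right (Nat.sub_le n 1) (hF hxF)


namespace ConeAux

open Finset FinHypergraph

lemma mem_edges {n k : ℕ} (hn : 1 ≤ n) {e : Finset ℕ} :
    e ∈ (coneHypergraph n k hn).edges ↔
      ∃ F, F ⊆ Finset.Icc 1 (n-1) ∧ F.card = k-1 ∧ e = insert n F := by
  simp only [coneHypergraph, Finset.mem_image, Finset.mem_powersetCard]
  constructor
  · rintro ⟨F, ⟨h1, h2⟩, rfl⟩; exact ⟨F, h1, h2, rfl⟩
  · rintro ⟨F, h1, h2, rfl⟩; exact ⟨F, ⟨h1, h2⟩, rfl⟩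

lemma verts_eq {n k : ℕ} (hn : 1 ≤ n) :
    (coneHypergraph n k hn).verts = Finset.Icc 1 n := rfl

lemma exists_edge {n k : ℕ} (hk : 2 ≤ k) (hkn : k ≤ n) (hn : 1 ≤ n) {S : Finset ℕ}
    (hS : S ⊆ Finset.Icc 1 (n-1)) (hc : S.card ≤ k-1) :
    ∃ E' ∈ (coneHypergraph n k hn).edges, insert n S ⊆ E' := by
  obtain ⟨F, hSF, hFsub, hFc⟩ := Finset.exists_subsuperset_card_eq hS hc
    (by rw [Nat.card_Icc]; omega)
  exact ⟨insert n F, (mem_edges hn).2 ⟨F, hFsub, hFc, rfl⟩,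
    Finset.insert_subset_insert _ hSF⟩

lemma blocker_edge {n k : ℕ} (hk : 2 ≤ k) (hkn : k ≤ n) (hn : 1 ≤ n)
    {A F : Finset ℕ} {u : ℕ} (hBF : A.erase n ⊆ F) (hFsub : F ⊆ Finset.Icc 1 (n-1))
    (hBc : (A.erase n).card ≤ k - 2) (hu : u ∈ Finset.Icc 1 (n-1)) :
    ∃ E' ∈ (coneHypergraph n k hn).edges, A ∪ {u} ⊆ E' := by
  obtain ⟨E', hE', hsub⟩ := exists_edge hk hkn hn (S := insert u (A.erase n))
    (Finset.insert_subset hu (hBF.trans hFsub))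
    (by have := Finset.card_insert_le u (A.erase n); omega)
  refine ⟨E', hE', ?_⟩
  intro a ha
  rcases Finset.mem_union.1 ha with h1 | h1
  · by_cases han : a = n
    · subst han; exact hsub (Finset.mem_insert_self _ _)
    · exact hsub (Finset.mem_insert_of_mem
        (Finset.mem_insert_of_mem (Finset.mem_erase.2 ⟨han, h1⟩)))
  · rw [Finset.mem_singleton.1 h1]
    exact hsub (Finset.mem_insert_of_mem (Finset.mem_insert_self _ _))

lemma invA {n k : ℕ} (hk : 2 ≤ k) (hkn : k ≤ n) (hn : 1 ≤ n) {W : Finset ℕ}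
    (hW : W.card + k + 1 ≤ n) {v : ℕ}
    (h : (coneHypergraph n k hn).InfectedFromM 1 W v) : v ∈ insert n W := by
  induction h with
  | init hv => exact Finset.mem_insert_of_mem hv
  | @spread A E v hcard hAE hE hAinf hblock hv ihA ihblock =>
    obtain ⟨F, hFsub, hFc, rfl⟩ := (mem_edges hn).1 hE
    have hBW : A.erase n ⊆ W := by
      intro a ha
      rcases Finset.mem_insert.1 (ihA a (Finset.mem_of_mem_erase ha)) with h1 | h1
      · exact absurd h1 (Finset.ne_of_mem_erase ha)
      · exact h1
    have hBF : A.erase n ⊆ F := by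
      intro a ha
      rcases Finset.mem_insert.1 (hAE (Finset.mem_of_mem_erase ha)) with h1 | h1
      · exact absurd h1 (Finset.ne_of_mem_erase ha)
      · exact h1
    by_cases hcase : (A.erase n).card = k - 1
    · have hBFe : A.erase n = F := Finset.eq_of_subset_of_card_le hBF (by omega)
      rcases Finset.mem_insert.1 hv with h1 | h1
      · exact h1 ▸ Finset.mem_insert_self _ _
      · exact Finset.mem_insert_of_mem (hBW (hBFe ▸ h1))
    · have hBc : (A.erase n).card ≤ k - 2 := by
        have := Finset.card_le_card hBF; omega
      have hex : ∃ u ∈ Finset.Icc 1 (n-1), u ∉ F ∪ W := by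
        by_contra hcon
        push_neg at hcon
        have hsub : Finset.Icc 1 (n-1) ⊆ F ∪ W := fun u hu => hcon u hu
        have h1 := Finset.card_le_card hsub
        have h2 := Finset.card_union_le F W
        rw [Nat.card_Icc] at h1
        omega
      obtain ⟨u, hu, huFW⟩ := hex
      have huIcc := Finset.mem_Icc.1 hu
      have hun : u ≠ n := by omega
      have huF : u ∉ F := fun hc => huFW (Finset.mem_union_left _ hc)
      have huW : u ∉ W := fun hc => huFW (Finset.mem_union_right _ hc)
      have huE : u ∉ insert n F := by
        simp only [Finset.mem_insert]; tauto
      have huV : u ∈ (coneHypergraph n k hn).verts := by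
        rw [verts_eq]; exact Finset.mem_Icc.2 ⟨huIcc.1, by omega⟩
      have := ihblock u huV huE (blocker_edge hk hkn hn hBF hFsub hBc hu)
      rcases Finset.mem_insert.1 this with h1 | h1
      · exact absurd h1 hun
      · exact absurd h1 huW

lemma invB {n k : ℕ} (hk : 2 ≤ k) (hkn : k ≤ n) (hn : 1 ≤ n) (h2k : n + 2 ≤ 2*k)
    {W : Finset ℕ} (hW : W.card + k ≤ n) {v : ℕ}
    (h : (coneHypergraph n k hn).InfectedFromM 1 W v) : v ∈ W := by
  induction h with
  | init hv => exact hv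
  | @spread A E v hcard hAE hE hAinf hblock hv ihA ihblock =>
    exfalso
    obtain ⟨F, hFsub, hFc, rfl⟩ := (mem_edges hn).1 hE
    have hAW : A ⊆ W := fun a ha => ihA a ha
    have hBF : A.erase n ⊆ F := by
      intro a ha
      rcases Finset.mem_insert.1 (hAE (Finset.mem_of_mem_erase ha)) with h1 | h1
      · exact absurd h1 (Finset.ne_of_mem_erase ha)
      · exact h1
    have hBc : (A.erase n).card ≤ k - 2 := by
      have h1 := Finset.card_le_card hBF
      have h2 := Finset.card_le_card ((Finset.erase_subset n A).trans hAW)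
      omega
    have hcount : (F ∪ W.erase n).card + 2 ≤ n := by
      by_cases hnA : n ∈ A
      · have hnW : n ∈ W := hAW hnA
        have h1 := Finset.card_union_le F (W.erase n)
        have h2 := Finset.card_erase_of_mem hnW
        have h3 : 1 ≤ W.card := Finset.card_pos.2 ⟨n, hnW⟩
        omega
      · have hAe : A.erase n = A := Finset.erase_eq_of_notMem hnA
        have hBWe : A.erase n ⊆ F ∩ W.erase n := by
          intro a ha
          refine Finset.mem_inter.2 ⟨hBF ha, Finset.mem_erase.2
            ⟨Finset.ne_of_mem_erase ha, hAW (Finset.mem_of_mem_erase ha)⟩⟩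
        have h1 : 1 ≤ (F ∩ W.erase n).card := by
          have h := Finset.card_le_card hBWe
          rw [hAe] at h
          omega
        have h2 := Finset.card_union_add_card_inter F (W.erase n)
        have h3 := Finset.card_le_card (Finset.erase_subset n W)
        omega
    have hex : ∃ u ∈ Finset.Icc 1 (n-1), u ∉ F ∪ W.erase n := by
      by_contra hcon
      push_neg at hcon
      have hsub : Finset.Icc 1 (n-1) ⊆ F ∪ W.erase n := fun u hu => hcon u hu
      have h1 := Finset.card_le_card hsub
      rw [Nat.card_Icc] at h1
      omega
    obtain ⟨u, hu, huFW⟩ := hex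
    have huIcc := Finset.mem_Icc.1 hu
    have hun : u ≠ n := by omega
    have huF : u ∉ F := fun hc => huFW (Finset.mem_union_left _ hc)
    have huW : u ∉ W := fun hc =>
      huFW (Finset.mem_union_right _ (Finset.mem_erase.2 ⟨hun, hc⟩))
    have huE : u ∉ insert n F := by
      simp only [Finset.mem_insert]; tauto
    have huV : u ∈ (coneHypergraph n k hn).verts := by
      rw [verts_eq]; exact Finset.mem_Icc.2 ⟨huIcc.1, by omega⟩
    exact huW (ihblock u huV huE (blocker_edge hk hkn hn hBF hFsub hBc hu))

lemma upper1 {n k : ℕ} (hk : 2 ≤ k) (h2k : 2*k - 1 ≤ n) (hn : 1 ≤ n) :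
    (coneHypergraph n k hn).IsInfectionSetM 1 (Finset.Icc 1 (n-k)) := by
  have hkn : k ≤ n := by omega
  constructor
  · rw [verts_eq]; exact Finset.Icc_subset_Icc_right (by omega)
  · intro v hv
    rw [verts_eq] at hv
    have hv' := Finset.mem_Icc.1 hv
    have stepn : (coneHypergraph n k hn).InfectedFromM 1 (Finset.Icc 1 (n-k)) n := by
      refine FinHypergraph.InfectedFromM.spread (A := Finset.Icc 1 (k-1))
        (E := insert n (Finset.Icc 1 (k-1)))
        ?_ (Finset.subset_insert _ _) ?_ ?_ ?_ (Finset.mem_insert_self _ _)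
      · rw [Nat.card_Icc]; omega
      · exact (mem_edges hn).2 ⟨_, Finset.Icc_subset_Icc_right (by omega),
          by rw [Nat.card_Icc]; omega, rfl⟩
      · intro a ha
        exact FinHypergraph.InfectedFromM.init (Finset.Icc_subset_Icc_right (by omega) ha)
      · intro u hu huE hEx
        exfalso
        obtain ⟨E', hE', hsub⟩ := hEx
        obtain ⟨F', hF'sub, hF'c, rfl⟩ := (mem_edges hn).1 hE'
        have hAF' : Finset.Icc 1 (k-1) ⊆ F' := by
          intro a ha
          have h1 := Finset.mem_Icc.1 ha
          rcases Finset.mem_insert.1 (hsub (Finset.mem_union_left _ ha)) with h2 | h2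
          · omega
          · exact h2
        have heq : Finset.Icc 1 (k-1) = F' :=
          Finset.eq_of_subset_of_card_le hAF' (by rw [Nat.card_Icc]; omega)
        have hu' : u ∈ insert n F' :=
          hsub (Finset.mem_union_right _ (Finset.mem_singleton_self u))
        rw [← heq] at hu'
        exact huE hu'
    by_cases hvW : v ≤ n - k
    · exact FinHypergraph.InfectedFromM.init (Finset.mem_Icc.2 ⟨hv'.1, hvW⟩)
    · refine FinHypergraph.InfectedFromM.spread (A := {n})
        (E := insert n (Finset.Icc (n-k+1) (n-1)))
        (by simp) (Finset.singleton_subset_iff.2 (Finset.mem_insert_self _ _)) ?_ ?_ ?_ ?_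
      · exact (mem_edges hn).2 ⟨_, Finset.Icc_subset_Icc (by omega) le_rfl,
          by rw [Nat.card_Icc]; omega, rfl⟩
      · intro a ha
        rw [Finset.mem_singleton.1 ha]
        exact stepn
      · intro u hu huE _
        apply FinHypergraph.InfectedFromM.init
        rw [verts_eq] at hu
        have h1 := Finset.mem_Icc.1 hu
        refine Finset.mem_Icc.2 ⟨h1.1, ?_⟩
        by_contra hc
        apply huE
        simp only [Finset.mem_insert, Finset.mem_Icc]
        omega
      · simp only [Finset.mem_insert, Finset.mem_Icc]
        omega

lemma upper2 {n k : ℕ} (hk : 2 ≤ k) (hkn : k ≤ n) (hn : 1 ≤ n) :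
    (coneHypergraph n k hn).IsInfectionSetM 1 (Finset.Icc 1 (n-k+1)) := by
  constructor
  · rw [verts_eq]; exact Finset.Icc_subset_Icc_right (by omega)
  · intro v hv
    rw [verts_eq] at hv
    have hv' := Finset.mem_Icc.1 hv
    by_cases hvW : v ≤ n - k + 1
    · exact FinHypergraph.InfectedFromM.init (Finset.mem_Icc.2 ⟨hv'.1, hvW⟩)
    · refine FinHypergraph.InfectedFromM.spread (A := {n-k+1})
        (E := insert n (Finset.Icc (n-k+1) (n-1)))
        (by simp) ?_ ?_ ?_ ?_ ?_
      · exact Finset.singleton_subset_iff.2 (Finset.mem_insert_of_mem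
          (Finset.mem_Icc.2 ⟨le_rfl, by omega⟩))
      · exact (mem_edges hn).2 ⟨_, Finset.Icc_subset_Icc (by omega) le_rfl,
          by rw [Nat.card_Icc]; omega, rfl⟩
      · intro a ha
        rw [Finset.mem_singleton.1 ha]
        exact FinHypergraph.InfectedFromM.init (Finset.mem_Icc.2 ⟨by omega, le_rfl⟩)
      · intro u hu huE _
        apply FinHypergraph.InfectedFromM.init
        rw [verts_eq] at hu
        have h1 := Finset.mem_Icc.1 hu
        refine Finset.mem_Icc.2 ⟨h1.1, ?_⟩
        by_contra hc
        apply huE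
        simp only [Finset.mem_insert, Finset.mem_Icc]
        omega
      · simp only [Finset.mem_insert, Finset.mem_Icc]
        omega

end ConeAux

/-- For `2 ≤ k ≤ n`, the hypergraph whose edges are all
`F ∪ {n}` with `F` a `(k-1)`-subset of `{1,…,n-1}` has infection number
`n - k` when `n ≥ 2k - 1`, and `n - k + 1` otherwise. -/
theorem infectionNumber_coneHypergraph (n k : ℕ) (hk : 2 ≤ k) (hkn : k ≤ n) :
    (2 * k - 1 ≤ n →
      (coneHypergraph n k (by omega)).infectionNumber = n - k) ∧
    (n < 2 * k - 1 →
      (coneHypergraph n k (by omega)).infectionNumber = n - k + 1) := by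
  have hn : 1 ≤ n := by omega
  constructor
  · intro h2k
    rw [FinHypergraph.infectionNumber, FinHypergraph.infectionNumberM]
    have hwit : (n - k) ∈ {m | ∃ W : Finset ℕ,
        (coneHypergraph n k (by omega)).IsInfectionSetM 1 W ∧ W.card = m} :=
      ⟨Finset.Icc 1 (n-k), ConeAux.upper1 hk h2k (by omega),
        by rw [Nat.card_Icc]; omega⟩
    refine le_antisymm (Nat.sInf_le hwit) ?_
    obtain ⟨W, hWinf, hWc⟩ := Nat.sInf_mem (Set.nonempty_of_mem hwit)
    by_contra hlt
    push_neg at hlt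
    have hWcard : W.card + k + 1 ≤ n := by omega
    have hex : ∃ u ∈ Finset.Icc 1 n, u ∉ insert n W := by
      by_contra hcon
      push_neg at hcon
      have h1 := Finset.card_le_card (fun u hu => hcon u hu :
        Finset.Icc 1 n ⊆ insert n W)
      have h2 := Finset.card_insert_le n W
      rw [Nat.card_Icc] at h1
      omega
    obtain ⟨u, hu, huW⟩ := hex
    exact huW (ConeAux.invA hk hkn (by omega) hWcard (hWinf.2 u hu))
  · intro h2k
    rw [FinHypergraph.infectionNumber, FinHypergraph.infectionNumberM]
    have hwit : (n - k + 1) ∈ {m | ∃ W : Finset ℕ,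
        (coneHypergraph n k (by omega)).IsInfectionSetM 1 W ∧ W.card = m} :=
      ⟨Finset.Icc 1 (n-k+1), ConeAux.upper2 hk hkn (by omega),
        by rw [Nat.card_Icc]; omega⟩
    refine le_antisymm (Nat.sInf_le hwit) ?_
    obtain ⟨W, hWinf, hWc⟩ := Nat.sInf_mem (Set.nonempty_of_mem hwit)
    by_contra hlt
    push_neg at hlt
    have hWcard : W.card + k ≤ n := by omega
    have hex : ∃ u ∈ Finset.Icc 1 n, u ∉ W := by
      by_contra hcon
      push_neg at hcon
      have h1 := Finset.card_le_card (fun u hu => hcon u hu :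
        Finset.Icc 1 n ⊆ W)
      rw [Nat.card_Icc] at h1
      omega
    obtain ⟨u, hu, huW⟩ := hex
    exact huW (ConeAux.invB hk hkn (by omega) (by omega) hWcard (hWinf.2 u hu))
end

section
/- Let H be a hypergraph whose edges E_1, ..., E_p (p ≥ 1) form a flower: there is a nonempty set A such that E_i ∩ E_j = A for all distinct i, j, and E_i properly contains A for each i. Assume every vertex lies in some edge. Then I(H) = p − 1 (for p ≥ 2). -/
/-- A flower with `p ≥ 2` petals (edges pairwise intersecting in a
fixed nonempty core `A` properly contained in each petal, every vertex lying in
some edge) has infection number `p - 1`. -/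
theorem infectionNumber_flower
    {α : Type*} [DecidableEq α] (H : FinHypergraph α) (p : ℕ) (hp : 2 ≤ p)
    (E : Fin p → Finset α) (hinj : Function.Injective E)
    (hedges : H.edges = Finset.univ.image E)
    (A : Finset α) (hA : A.Nonempty)
    (hcore : ∀ i j : Fin p, i ≠ j → E i ∩ E j = A)
    (hpetal : ∀ i : Fin p, A ⊂ E i)
    (hcover : ∀ v ∈ H.verts, ∃ e ∈ H.edges, v ∈ e) :
    H.infectionNumber = p - 1 := by
  classical
  have hEmem : ∀ i, E i ∈ H.edges := by
    intro i; rw [hedges]; exact Finset.mem_image_of_mem E (Finset.mem_univ i)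
  have hEvert : ∀ i, E i ⊆ H.verts := fun i => H.edge_sub _ (hEmem i)
  have hedge_ex : ∀ e ∈ H.edges, ∃ i, E i = e := by
    intro e he; rw [hedges] at he
    obtain ⟨i, _, hi⟩ := Finset.mem_image.1 he; exact ⟨i, hi⟩
  have huniq : ∀ {v : α} {i j : Fin p}, v ∈ E i → v ∈ E j → v ∉ A → i = j := by
    intro v i j hi hj hvA
    by_contra hne
    exact hvA (by rw [← hcore i j hne]; exact Finset.mem_inter.2 ⟨hi, hj⟩)
  -- lower bound
  have hlow : ∀ W : Finset α, H.IsInfectionSetM 1 W → p - 1 ≤ W.card := by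
    rintro W ⟨hWv, hWinf⟩
    set T : Finset (Fin p) := Finset.univ.filter (fun i => (W ∩ (E i \ A)).Nonempty) with hT
    have hmiss : ∀ i j : Fin p, i ∉ T → j ∉ T → i = j := by
      intro i j hi hj
      by_contra hij
      simp only [hT, Finset.mem_filter, Finset.mem_univ, true_and,
        Finset.not_nonempty_iff_eq_empty] at hi hj
      have hS : ∀ v, H.InfectedFromM 1 W v → v ∉ (E i \ A) ∪ (E j \ A) := by
        intro v hv
        induction hv with
        | init hvW =>
          intro hvS
          rcases Finset.mem_union.1 hvS with h | h
          · exact Finset.notMem_empty _ (hi ▸ Finset.mem_inter.2 ⟨hvW, h⟩)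
          · exact Finset.notMem_empty _ (hj ▸ Finset.mem_inter.2 ⟨hvW, h⟩)
        | @spread A' E' v' hcard hAE hE hAinf hblock hv ihA ihB =>
          intro hvS
          obtain ⟨k, rfl⟩ := hedge_ex _ hE
          -- symmetric handling
          have key : ∀ a b : Fin p, a ≠ b →
              (W ∩ (E a \ A)) = ∅ → (W ∩ (E b \ A)) = ∅ →
              v' ∈ E a \ A → (E a \ A) ∪ (E b \ A) = (E i \ A) ∪ (E j \ A) → False := by
            intro a b hab ha hb hva hun
            have hka : k = a := by
              have hv' : v' ∈ E a := (Finset.mem_sdiff.1 hva).1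
              exact huniq hv hv' (Finset.mem_sdiff.1 hva).2
            subst hka
            have hA'A : A' ⊆ A := by
              intro x hx
              have hxk : x ∈ E k := hAE hx
              have : x ∉ (E k \ A) ∪ (E b \ A) := hun ▸ ihA x hx
              by_contra hxA
              exact this (Finset.mem_union_left _ (Finset.mem_sdiff.2 ⟨hxk, hxA⟩))
            obtain ⟨u, hub, huA⟩ := Finset.exists_of_ssubset (hpetal b)
            have huv : u ∈ H.verts := hEvert b hub
            have huk : u ∉ E k := fun h => hab (huniq h hub huA)
            have hsub : ∃ E'' ∈ H.edges, A' ∪ {u} ⊆ E'' :=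
              ⟨E b, hEmem b, Finset.union_subset (hA'A.trans (hpetal b).subset)
                (Finset.singleton_subset_iff.2 hub)⟩
            have := hun ▸ ihB u huv huk hsub
            exact this (Finset.mem_union_right _ (Finset.mem_sdiff.2 ⟨hub, huA⟩))
          rcases Finset.mem_union.1 hvS with h | h
          · exact key i j hij hi hj h rfl
          · exact key j i (Ne.symm hij) hj hi h (Finset.union_comm _ _)
      -- contradiction: some vertex of E i \ A is never infected
      obtain ⟨u, hui, huA⟩ := Finset.exists_of_ssubset (hpetal i)
      exact hS u (hWinf u (hEvert i hui))
        (Finset.mem_union_left _ (Finset.mem_sdiff.2 ⟨hui, huA⟩))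
    have hcompl : (Finset.univ \ T).card ≤ 1 := by
      refine Finset.card_le_one.2 (fun a ha b hb => ?_)
      exact hmiss a b (Finset.mem_sdiff.1 ha).2 (Finset.mem_sdiff.1 hb).2
    have hTcard : p - 1 ≤ T.card := by
      have h1 : (Finset.univ \ T).card = p - T.card := by
        rw [Finset.card_sdiff_of_subset (Finset.subset_univ T), Finset.card_univ, Fintype.card_fin]
      have h2 : T.card ≤ p := by
        have := Finset.card_le_card (Finset.subset_univ T)
        simpa using this
      omega
    -- pick elements
    have hdef : ∀ i ∈ T, (W ∩ (E i \ A)).Nonempty := by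
      intro i hi
      simpa [hT] using (Finset.mem_filter.1 hi).2
    choose g hg using fun (i : Fin p) (hi : i ∈ T) => hdef i hi
    calc p - 1 ≤ T.card := hTcard
      _ ≤ W.card := by
          refine Finset.card_le_card_of_injOn (fun i => if h : i ∈ T then g i h else hA.choose)
            ?_ ?_
          · intro i hi
            simp only [Finset.mem_coe] at hi
            simp only [hi, dif_pos, Finset.mem_coe]
            exact (Finset.mem_inter.1 (hg i hi)).1
          · intro i hi j hj hij
            simp only [Finset.mem_coe] at hi hj
            simp only [hi, hj, dif_pos] at hij
            have h1 := Finset.mem_sdiff.1 (Finset.mem_inter.1 (hg i hi)).2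
            have h2 := Finset.mem_sdiff.1 (Finset.mem_inter.1 (hg j hj)).2
            exact huniq h1.1 (hij ▸ h2.1) h1.2
  -- upper bound construction
  choose w hw1 hw2 using fun i => Finset.exists_of_ssubset (hpetal i)
  have winj : Function.Injective w := by
    intro i j hij
    exact huniq (hw1 i) (hij ▸ hw1 j) (hw2 i)
  set i0 : Fin p := ⟨0, by omega⟩ with hi0
  set W : Finset α := (Finset.univ.erase i0).image w with hW
  have hWcard : W.card = p - 1 := by
    rw [hW, Finset.card_image_of_injective _ winj,
      Finset.card_erase_of_mem (Finset.mem_univ i0), Finset.card_univ, Fintype.card_fin]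
  have hpet : ∀ i, i ≠ i0 → ∀ v ∈ E i, H.InfectedFromM 1 W v := by
    intro i hi v hv
    refine .spread (A := {w i}) (E := E i) (by simp)
      (Finset.singleton_subset_iff.2 (hw1 i)) (hEmem i) ?_ ?_ hv
    · intro a ha
      rw [Finset.mem_singleton] at ha; subst ha
      exact .init (Finset.mem_image_of_mem w (Finset.mem_erase.2 ⟨hi, Finset.mem_univ i⟩))
    · rintro u hu huE ⟨E', hE', hsub⟩
      obtain ⟨k, rfl⟩ := hedge_ex _ hE'
      have hwk : w i ∈ E k := hsub (Finset.mem_union_left _ (Finset.mem_singleton_self _))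
      have hki : k = i := huniq hwk (hw1 i) (hw2 i)
      exact absurd (hki ▸ hsub (Finset.mem_union_right _ (Finset.mem_singleton_self u))) huE
  have hi1 : ∃ i1 : Fin p, i1 ≠ i0 := ⟨⟨1, by omega⟩, by simp [hi0, Fin.ext_iff]⟩
  obtain ⟨i1, hi1⟩ := hi1
  have hcoreinf : ∀ a ∈ A, H.InfectedFromM 1 W a :=
    fun a ha => hpet i1 hi1 a ((hpetal i1).subset ha)
  have hEi0 : ∀ v ∈ E i0, H.InfectedFromM 1 W v := by
    intro v hv
    refine .spread (A := A) (E := E i0) hA.card_pos (hpetal i0).subset (hEmem i0)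
      hcoreinf ?_ hv
    rintro u hu huE ⟨E', hE', hsub⟩
    obtain ⟨k, rfl⟩ := hedge_ex _ hE'
    have huk : u ∈ E k := hsub (Finset.mem_union_right _ (Finset.mem_singleton_self u))
    have hk0 : k ≠ i0 := fun h => huE (h ▸ huk)
    exact hpet k hk0 u huk
  have hWset : H.IsInfectionSetM 1 W := by
    constructor
    · intro x hx
      rw [hW] at hx
      obtain ⟨i, _, rfl⟩ := Finset.mem_image.1 hx
      exact hEvert i (hw1 i)
    · intro v hv
      obtain ⟨e, he, hve⟩ := hcover v hv
      obtain ⟨k, rfl⟩ := hedge_ex _ he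
      by_cases hk : k = i0
      · exact hEi0 v (hk ▸ hve)
      · exact hpet k hk v hve
  -- conclude
  have hne : {n | ∃ W : Finset α, H.IsInfectionSetM 1 W ∧ W.card = n}.Nonempty :=
    ⟨p - 1, W, hWset, hWcard⟩
  refine le_antisymm (Nat.sInf_le ⟨W, hWset, hWcard⟩) ?_
  obtain ⟨W', hW', hcard'⟩ := Nat.sInf_mem hne
  show p - 1 ≤ sInf {n | ∃ W : Finset α, H.IsInfectionSetM 1 W ∧ W.card = n}
  rw [← hcard']
  exact hlow W' hW'
end

section
/- Let H be a reduced, connected, linear hypergraph (every two edges share at most one vertex) in which every vertex has degree at most 2, with at least one edge and every edge of size at least 2. Then I(H) ≤ 2, and I(H) = 1 if and only if H has a vertex of degree 1. -/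
section Aux

open FinHypergraph

variable {α : Type*} [DecidableEq α]

lemma not_infected_empty {H : FinHypergraph α} {v : α} :
    ¬ H.InfectedFromM 1 ∅ v := by
  intro h
  induction h with
  | init hv => simp at hv
  | spread hcard hAE hE hAinf hblock hv ihA ihblock =>
    obtain ⟨a, ha⟩ := Finset.card_pos.mp hcard
    exact ihA a ha

/-- If an edge `E` is fully infected and shares a vertex `c` with `F`,
then `F` becomes fully infected. -/
lemma infect_edge_of_shared {H : FinHypergraph α}
    (hdeg : ∀ v ∈ H.verts, H.degree v ≤ 2)
    {W E F : Finset α} (hE : E ∈ H.edges) (hF : F ∈ H.edges) (hEF : E ≠ F)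
    {c : α} (hcE : c ∈ E) (hcF : c ∈ F)
    (hEinf : ∀ x ∈ E, H.InfectedFromM 1 W x) :
    ∀ x ∈ F, H.InfectedFromM 1 W x := by
  intro x hx
  refine FinHypergraph.InfectedFromM.spread (A := {c}) (E := F) (by simp)
    (by simp [hcF]) hF ?_ ?_ hx
  · intro a ha
    simp only [Finset.mem_singleton] at ha
    subst ha
    exact hEinf _ hcE
  · rintro u hu huF ⟨E', hE', hsub⟩
    have hcE' : c ∈ E' := hsub (by simp)
    have huE' : u ∈ E' := hsub (by simp)
    have hcv : c ∈ H.verts := H.edge_sub E hE hcE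
    have hd := hdeg c hcv
    have hsubf : ({E, F} : Finset (Finset α)) ⊆ H.edges.filter (fun e => c ∈ e) := by
      intro g hg
      simp only [Finset.mem_insert, Finset.mem_singleton] at hg
      rcases hg with rfl | rfl <;> simp [Finset.mem_filter, hE, hF, hcE, hcF]
    have heq : ({E, F} : Finset (Finset α)) = H.edges.filter (fun e => c ∈ e) :=
      Finset.eq_of_subset_of_card_le hsubf (by rw [Finset.card_pair hEF]; exact hd)
    have hmem : E' ∈ ({E, F} : Finset (Finset α)) := by
      rw [heq]; simp [Finset.mem_filter, hE', hcE']
    simp only [Finset.mem_insert, Finset.mem_singleton] at hmem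
    rcases hmem with rfl | rfl
    · exact hEinf u huE'
    · exact absurd huE' huF

/-- Every vertex lies in some edge. -/
lemma mem_edge_of_mem_verts {H : FinHypergraph α} (hconn : H.Connected)
    (hne : H.edges.Nonempty) (hsize : ∀ e ∈ H.edges, 2 ≤ e.card)
    {v : α} (hv : v ∈ H.verts) : ∃ e ∈ H.edges, v ∈ e := by
  obtain ⟨e₀, he₀⟩ := hne
  obtain ⟨u, hu⟩ := Finset.card_pos.mp (show 0 < e₀.card by have := hsize e₀ he₀; omega)
  have hchain := hconn u (H.edge_sub e₀ he₀ hu) v hv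
  rcases hchain.cases_tail with rfl | ⟨b, _, hadj⟩
  · exact ⟨e₀, he₀, hu⟩
  · obtain ⟨e, he, _, hve⟩ := hadj
    exact ⟨e, he, hve⟩

/-- If one edge is fully infected, every vertex gets infected. -/
lemma infect_all {H : FinHypergraph α} (hconn : H.Connected)
    (hdeg : ∀ v ∈ H.verts, H.degree v ≤ 2)
    (hsize : ∀ e ∈ H.edges, 2 ≤ e.card)
    {W E : Finset α} (hE : E ∈ H.edges)
    (hEinf : ∀ x ∈ E, H.InfectedFromM 1 W x) :
    ∀ v ∈ H.verts, H.InfectedFromM 1 W v := by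
  intro v hv
  obtain ⟨u, hu⟩ := Finset.card_pos.mp (by have := hsize E hE; omega : 0 < E.card)
  have huv : Relation.ReflTransGen H.Adj u v := hconn u (H.edge_sub E hE hu) v hv
  have key : ∃ g ∈ H.edges, v ∈ g ∧ ∀ x ∈ g, H.InfectedFromM 1 W x := by
    clear hv
    induction huv with
    | refl => exact ⟨E, hE, hu, hEinf⟩
    | tail hub hadj ih =>
      obtain ⟨g, hg, hbg, hginf⟩ := ih
      obtain ⟨e, he, hbe, hce⟩ := hadj
      by_cases hge : g = e
      · exact ⟨e, he, hce, hge ▸ hginf⟩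
      · exact ⟨e, he, hce, infect_edge_of_shared hdeg hg he hge hbg hbe hginf⟩
  obtain ⟨g, _, hvg, hginf⟩ := key
  exact hginf v hvg

/-- A single vertex of degree one is an infection set. -/
lemma infection_of_deg_one {H : FinHypergraph α} (hconn : H.Connected)
    (hdeg : ∀ v ∈ H.verts, H.degree v ≤ 2)
    (hne : H.edges.Nonempty) (hsize : ∀ e ∈ H.edges, 2 ≤ e.card)
    {w : α} (hw : w ∈ H.verts) (hdw : H.degree w = 1) :
    H.IsInfectionSetM 1 {w} := by
  obtain ⟨E, hE, hwE⟩ := mem_edge_of_mem_verts hconn hne hsize hw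
  have hEfil : E ∈ H.edges.filter (fun e => w ∈ e) := by
    simp [Finset.mem_filter, hE, hwE]
  have hEinf : ∀ x ∈ E, H.InfectedFromM 1 {w} x := by
    intro x hx
    refine FinHypergraph.InfectedFromM.spread (A := {w}) (E := E) (by simp)
      (by simp [hwE]) hE ?_ ?_ hx
    · intro a ha
      simp only [Finset.mem_singleton] at ha
      subst ha
      exact .init (by simp)
    · rintro u hu huE ⟨E', hE', hsub⟩
      have hE'fil : E' ∈ H.edges.filter (fun e => w ∈ e) := by
        simp only [Finset.mem_filter]
        exact ⟨hE', hsub (by simp)⟩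
      obtain ⟨y, hy⟩ := Finset.card_eq_one.mp hdw
      rw [hy, Finset.mem_singleton] at hEfil hE'fil
      have : E' = E := hE'fil.trans hEfil.symm
      subst this
      exact absurd (hsub (by simp)) huE
  exact ⟨by simpa using hw, infect_all hconn hdeg hsize hE hEinf⟩

/-- Two distinct vertices of an edge form an infection set. -/
lemma infection_pair {H : FinHypergraph α} (hconn : H.Connected)
    (hlin : ∀ e ∈ H.edges, ∀ f ∈ H.edges, e ≠ f → (e ∩ f).card ≤ 1)
    (hdeg : ∀ v ∈ H.verts, H.degree v ≤ 2)
    (hsize : ∀ e ∈ H.edges, 2 ≤ e.card)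
    {E : Finset α} {a b : α} (hE : E ∈ H.edges)
    (ha : a ∈ E) (hb : b ∈ E) (hab : a ≠ b) :
    H.IsInfectionSetM 1 {a, b} := by
  have hEinf : ∀ x ∈ E, H.InfectedFromM 1 {a, b} x := by
    intro x hx
    refine FinHypergraph.InfectedFromM.spread (A := {a, b}) (E := E)
      (by rw [Finset.card_pair hab]; omega) ?_ hE ?_ ?_ hx
    · intro y hy
      simp only [Finset.mem_insert, Finset.mem_singleton] at hy
      rcases hy with rfl | rfl
      · exact ha
      · exact hb
    · intro y hy
      exact .init hy
    · rintro u hu huE ⟨E', hE', hsub⟩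
      have haE' : a ∈ E' := hsub (by simp)
      have hbE' : b ∈ E' := hsub (by simp)
      have huE' : u ∈ E' := hsub (by simp)
      by_cases hEE' : E = E'
      · exact absurd (hEE' ▸ huE') huE
      · have h2 : 2 ≤ (E ∩ E').card := by
          have : ({a, b} : Finset α) ⊆ E ∩ E' := by
            intro y hy
            simp only [Finset.mem_insert, Finset.mem_singleton] at hy
            rcases hy with rfl | rfl <;> simp [Finset.mem_inter, ha, hb, haE', hbE']
          calc 2 = ({a, b} : Finset α).card := (Finset.card_pair hab).symm
            _ ≤ (E ∩ E').card := Finset.card_le_card this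
        have := hlin E hE E' hE' hEE'
        omega
  constructor
  · intro y hy
    simp only [Finset.mem_insert, Finset.mem_singleton] at hy
    rcases hy with rfl | rfl
    · exact H.edge_sub E hE ha
    · exact H.edge_sub E hE hb
  · exact infect_all hconn hdeg hsize hE hEinf

/-- If every vertex has degree 2, a single vertex infects nothing else. -/
lemma infected_eq_of_deg_two {H : FinHypergraph α}
    (hlin : ∀ e ∈ H.edges, ∀ f ∈ H.edges, e ≠ f → (e ∩ f).card ≤ 1)
    (hsize : ∀ e ∈ H.edges, 2 ≤ e.card)
    (hdeg2 : ∀ v ∈ H.verts, H.degree v = 2)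
    {w v : α} (h : H.InfectedFromM 1 {w} v) : v = w := by
  induction h with
  | init hv => simpa using hv
  | @spread A E v' hcard hAE hE hAinf hblock hv ihA ihblock =>
    obtain ⟨a, ha⟩ := Finset.card_pos.mp hcard
    have haw : a = w := ihA a ha
    have hwE : w ∈ E := haw ▸ hAE ha
    have hwv : w ∈ H.verts := H.edge_sub E hE hwE
    have hfil : (H.edges.filter (fun e => w ∈ e)).card = 2 := hdeg2 w hwv
    have hEfil : E ∈ H.edges.filter (fun e => w ∈ e) := by
      simp [Finset.mem_filter, hE, hwE]
    have herase : ((H.edges.filter (fun e => w ∈ e)).erase E).Nonempty := by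
      rw [← Finset.card_pos, Finset.card_erase_of_mem hEfil, hfil]
      omega
    obtain ⟨F, hFe⟩ := herase
    have hFE : F ≠ E := Finset.ne_of_mem_erase hFe
    have hFfil := Finset.mem_of_mem_erase hFe
    simp only [Finset.mem_filter] at hFfil
    obtain ⟨hF, hwF⟩ := hFfil
    have hFi : (F ∩ E).card ≤ 1 := hlin F hF E hE hFE
    have hFEcard : (F ∩ E).card + (F \ E).card = F.card :=
      Finset.card_inter_add_card_sdiff F E
    have hFne : (F \ E).Nonempty := by
      rw [← Finset.card_pos]
      have := hsize F hF
      omega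
    obtain ⟨u, hu⟩ := hFne
    rw [Finset.mem_sdiff] at hu
    have huv : u ∈ H.verts := H.edge_sub F hF hu.1
    have huw : u = w := by
      refine ihblock u huv hu.2 ⟨F, hF, ?_⟩
      intro y hy
      rw [Finset.mem_union, Finset.mem_singleton] at hy
      rcases hy with hy | rfl
      · have hyw : y = w := ihA y hy
        exact hyw ▸ hwF
      · exact hu.1
    subst huw
    exact absurd hwE hu.2

end Aux

/-- A reduced, connected, linear hypergraph with maximum degree
at most `2`, at least one edge, and all edges of size at least `2`, has
infection number at most `2`; and it equals `1` iff there is a vertex of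
degree `1`. -/
theorem infectionNumber_linear_maxDegree_two
    {α : Type*} [DecidableEq α] (H : FinHypergraph α)
    (hred : H.Reduced) (hconn : H.Connected)
    (hlin : ∀ e ∈ H.edges, ∀ f ∈ H.edges, e ≠ f → (e ∩ f).card ≤ 1)
    (hdeg : ∀ v ∈ H.verts, H.degree v ≤ 2)
    (hne : H.edges.Nonempty)
    (hsize : ∀ e ∈ H.edges, 2 ≤ e.card) :
    H.infectionNumber ≤ 2 ∧
      (H.infectionNumber = 1 ↔ ∃ v ∈ H.verts, H.degree v = 1) := by
  classical
  -- verts is nonempty and every edge gives two distinct vertices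
  have hne' := hne
  obtain ⟨E₀, hE₀⟩ := hne'
  have hE₀c := hsize E₀ hE₀
  obtain ⟨a, b, ha, hb, hab⟩ : ∃ a b, a ∈ E₀ ∧ b ∈ E₀ ∧ a ≠ b := by
    obtain ⟨a, ha, b, hb, hab⟩ := Finset.one_lt_card.mp (by omega : 1 < E₀.card)
    exact ⟨a, b, ha, hb, hab⟩
  have hpair := infection_pair hconn hlin hdeg hsize hE₀ ha hb hab
  have h2mem : 2 ∈ {n | ∃ W : Finset α, H.IsInfectionSetM 1 W ∧ W.card = n} :=
    ⟨{a, b}, hpair, Finset.card_pair hab⟩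
  have hSne : {n | ∃ W : Finset α, H.IsInfectionSetM 1 W ∧ W.card = n}.Nonempty := ⟨2, h2mem⟩
  have h0 : 0 ∉ {n | ∃ W : Finset α, H.IsInfectionSetM 1 W ∧ W.card = n} := by
    rintro ⟨W, hW, hWc⟩
    rw [Finset.card_eq_zero] at hWc
    subst hWc
    have haV : a ∈ H.verts := H.edge_sub E₀ hE₀ ha
    exact not_infected_empty (hW.2 a haV)
  have hle2 : H.infectionNumber ≤ 2 := Nat.sInf_le h2mem
  refine ⟨hle2, ?_, ?_⟩
  · -- infectionNumber = 1 → ∃ deg 1 vertex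
    intro h1
    have h1mem : 1 ∈ {n | ∃ W : Finset α, H.IsInfectionSetM 1 W ∧ W.card = n} := by
      have hmem := Nat.sInf_mem hSne
      rwa [show sInf {n | ∃ W : Finset α, H.IsInfectionSetM 1 W ∧ W.card = n}
        = H.infectionNumber from rfl, h1] at hmem
    obtain ⟨W, hW, hWc⟩ := h1mem
    obtain ⟨w, rfl⟩ := Finset.card_eq_one.mp hWc
    by_contra hno
    push_neg at hno
    have hdeg2 : ∀ v ∈ H.verts, H.degree v = 2 := by
      intro v hv
      obtain ⟨e, he, hve⟩ := mem_edge_of_mem_verts hconn hne hsize hv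
      have h1le : 1 ≤ H.degree v := by
        unfold FinHypergraph.degree
        exact Finset.card_pos.mpr ⟨e, by simp [Finset.mem_filter, he, hve]⟩
      have := hdeg v hv
      have := hno v hv
      omega
    -- pick a vertex distinct from w
    have : ∃ v ∈ H.verts, v ≠ w := by
      rcases eq_or_ne a w with rfl | haw
      · exact ⟨b, H.edge_sub E₀ hE₀ hb, fun h => hab h.symm⟩
      · exact ⟨a, H.edge_sub E₀ hE₀ ha, haw⟩
    obtain ⟨v, hv, hvw⟩ := this
    exact hvw (infected_eq_of_deg_two hlin hsize hdeg2 (hW.2 v hv))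
  · -- ∃ deg 1 vertex → infectionNumber = 1
    rintro ⟨v, hv, hdv⟩
    have h1mem : 1 ∈ {n | ∃ W : Finset α, H.IsInfectionSetM 1 W ∧ W.card = n} :=
      ⟨{v}, infection_of_deg_one hconn hdeg hne hsize hv hdv, Finset.card_singleton v⟩
    have hle1 : H.infectionNumber ≤ 1 := Nat.sInf_le h1mem
    have hmem := Nat.sInf_mem hSne
    have hne0 : H.infectionNumber ≠ 0 := fun h => h0 (h ▸ hmem)
    have : H.infectionNumber = sInf {n | ∃ W : Finset α, H.IsInfectionSetM 1 W ∧ W.card = n} := rfl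
    omega
end

section
/- If H is a reduced interval hypergraph (every edge is an interval with respect to some linear ordering of the vertices), then I(H) equals the number of connected components of H. -/
namespace FinHypergraph

variable {α : Type*} [DecidableEq α]

lemma adj_symm' (H : FinHypergraph α) : Symmetric H.Adj := by
  rintro u v ⟨e, he, hu, hv⟩; exact ⟨e, he, hv, hu⟩

lemma mem_component_iff' (H : FinHypergraph α) {u x : α} :
    x ∈ H.component u ↔ x ∈ H.verts ∧ Relation.ReflTransGen H.Adj u x := by
  classical
  unfold component
  simp

lemma component_eq_of_reaches (H : FinHypergraph α) {u v : α}
    (h : Relation.ReflTransGen H.Adj u v) : H.component u = H.component v := by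
  ext x
  rw [H.mem_component_iff', H.mem_component_iff']
  constructor
  · rintro ⟨hx, hp⟩
    exact ⟨hx, (((@Relation.ReflTransGen.symmetric _ H.Adj ⟨fun a b hab => H.adj_symm' hab⟩).symm _ _ h).trans hp)⟩
  · rintro ⟨hx, hp⟩
    exact ⟨hx, h.trans hp⟩

lemma infected_reaches (H : FinHypergraph α) {W : Finset α} {v : α}
    (h : InfectedFromM H 1 W v) : ∃ w ∈ W, Relation.ReflTransGen H.Adj w v := by
  induction h with
  | init hv => exact ⟨_, hv, Relation.ReflTransGen.refl⟩
  | @spread A E v hcard hAE hE hAinf hblock hv ih1 ih2 =>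
    obtain ⟨a, ha⟩ := Finset.card_pos.mp hcard
    obtain ⟨w, hw, hpath⟩ := ih1 a ha
    exact ⟨w, hw, hpath.tail ⟨E, hE, hAE ha, hv⟩⟩

/-- Straddle lemma: along a path from `x` to `u`, if a threshold `t` separates
the values, some edge straddles `t`. -/
lemma straddle (H : FinHypergraph α) {x u : α}
    (hpath : Relation.ReflTransGen H.Adj x u) :
    ∀ t : ℕ, ∀ f0 : α → ℕ, f0 x < t → t ≤ f0 u →
      ∃ E ∈ H.edges, ∃ a ∈ E, ∃ c ∈ E, f0 a < t ∧ t ≤ f0 c := by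
  induction hpath with
  | refl => intro t f0 h1 h2; omega
  | @tail b c hxb hbc ih =>
    intro t f0 h1 h2
    rcases lt_or_ge (f0 b) t with hb | hb
    · obtain ⟨e, he, hbe, hce⟩ := hbc
      exact ⟨e, he, b, hbe, c, hce, hb, h2⟩
    · exact ih t f0 h1 hb

end FinHypergraph

/-- The infection number of a reduced interval hypergraph equals
its number of connected components. -/
theorem infectionNumber_interval_eq_card_components
    {α : Type*} [DecidableEq α] (H : FinHypergraph α)
    (hred : H.Reduced)
    (f : α → ℕ) (hfinj : Set.InjOn f H.verts)
    (hint : ∀ e ∈ H.edges, ∀ u ∈ e, ∀ w ∈ e, ∀ v ∈ H.verts,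
      f u ≤ f v → f v ≤ f w → v ∈ e) :
    H.infectionNumber = (H.verts.image H.component).card := by
  classical
  have hcomp_mem : ∀ v ∈ H.verts, v ∈ H.component v := fun v hv =>
    H.mem_component_iff'.mpr ⟨hv, Relation.ReflTransGen.refl⟩
  set k := (H.verts.image H.component).card with hk
  -- the infection set: f-minima of components
  set W0 := H.verts.filter (fun u => ∀ x ∈ H.component u, f u ≤ f x) with hW0
  have hW0sub : W0 ⊆ H.verts := Finset.filter_subset _ _
  -- main upper-bound induction
  have hmain : ∀ n : ℕ, ∀ u ∈ H.verts, f u < n → FinHypergraph.InfectedFromM H 1 W0 u := by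
    intro n
    induction n with
    | zero => intro u _ h; omega
    | succ n ih =>
      intro u hu hfu
      rcases lt_or_ge (f u) n with h | h
      · exact ih u hu h
      by_cases hmin : ∀ x ∈ H.component u, f u ≤ f x
      · exact .init (Finset.mem_filter.mpr ⟨hu, hmin⟩)
      push_neg at hmin
      obtain ⟨x, hxc, hxf⟩ := hmin
      obtain ⟨hxv, hux⟩ := H.mem_component_iff'.1 hxc
      have hpath : Relation.ReflTransGen H.Adj x u :=
        (@Relation.ReflTransGen.symmetric _ H.Adj ⟨fun a b hab => H.adj_symm' hab⟩).symm _ _ hux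
      obtain ⟨E1, hE1, a1, ha1, c1, hc1, hfa1, hfc1⟩ :=
        H.straddle hpath (f u) f hxf le_rfl
      have huE1 : u ∈ E1 := hint E1 hE1 a1 ha1 c1 hc1 u hu hfa1.le hfc1
      set ℰ := H.edges.filter (fun E => u ∈ E ∧ ∃ a ∈ E, f a < f u) with hℰ
      have hℰne : ℰ.Nonempty :=
        ⟨E1, Finset.mem_filter.mpr ⟨hE1, huE1, a1, ha1, hfa1⟩⟩
      obtain ⟨E, hEmem, hEmax⟩ := Finset.exists_max_image ℰ (fun E => E.sup f) hℰne
      rw [Finset.mem_filter] at hEmem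
      obtain ⟨hE, huE, a0, ha0, hfa0⟩ := hEmem
      set A := E.filter (fun a => f a < f u) with hA
      have hAE : A ⊆ E := Finset.filter_subset _ _
      have ha0A : a0 ∈ A := Finset.mem_filter.mpr ⟨ha0, hfa0⟩
      have hAcard : 1 ≤ A.card := Finset.card_pos.mpr ⟨a0, ha0A⟩
      have hinfA : ∀ a ∈ A, FinHypergraph.InfectedFromM H 1 W0 a := by
        intro a ha
        rw [Finset.mem_filter] at ha
        exact ih a (H.edge_sub E hE ha.1) (by omega)
      refine .spread hAcard hAE hE hinfA ?_ huE
      rintro w hw hwE ⟨E', hE', hsub⟩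
      rcases lt_or_ge (f w) (f u) with hfw | hfw
      · exact ih w hw (by omega)
      exfalso
      have ha0E' : a0 ∈ E' := hsub (Finset.mem_union_left _ ha0A)
      have hwE' : w ∈ E' := hsub (Finset.mem_union_right _ (Finset.mem_singleton_self w))
      have huE' : u ∈ E' := hint E' hE' a0 ha0E' w hwE' u hu hfa0.le hfw
      have hE'ℰ : E' ∈ ℰ := Finset.mem_filter.mpr ⟨hE', huE', a0, ha0E', hfa0⟩
      have hsup : E'.sup f ≤ E.sup f := hEmax E' hE'ℰ
      have hwsup : f w ≤ E.sup f := le_trans (Finset.le_sup hwE') hsup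
      obtain ⟨r, hrE, hrsup⟩ := Finset.exists_mem_eq_sup E ⟨u, huE⟩ f
      have hwr : f w ≤ f r := by rw [← hrsup]; exact hwsup
      exact hwE (hint E hE a0 ha0 r hrE w hw (le_trans hfa0.le hfw) hwr)
  have hW0inf : H.IsInfectionSetM 1 W0 :=
    ⟨hW0sub, fun v hv => hmain (f v + 1) v hv (Nat.lt_succ_self _)⟩
  have hW0card : W0.card ≤ k := by
    apply Finset.card_le_card_of_injOn H.component
    · intro u hu
      exact Finset.mem_image.mpr ⟨u, hW0sub hu, rfl⟩
    · intro u hu v hv hcomp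
      simp only [hW0, Finset.coe_filter, Set.mem_setOf_eq] at hu hv
      have hvu : v ∈ H.component u := by rw [hcomp]; exact hcomp_mem v hv.1
      have huv : u ∈ H.component v := by rw [← hcomp]; exact hcomp_mem u hu.1
      exact hfinj hu.1 hv.1 (le_antisymm (hu.2 v hvu) (hv.2 u huv))
  have hlower : ∀ n ∈ {n | ∃ W : Finset α, H.IsInfectionSetM 1 W ∧ W.card = n}, k ≤ n := by
    rintro n ⟨W, ⟨hWsub, hWinf⟩, rfl⟩
    have hsub : H.verts.image H.component ⊆ W.image H.component := by
      intro C hC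
      obtain ⟨v, hv, rfl⟩ := Finset.mem_image.mp hC
      obtain ⟨w, hwW, hpathwv⟩ := H.infected_reaches (hWinf v hv)
      exact Finset.mem_image.mpr ⟨w, hwW, H.component_eq_of_reaches hpathwv⟩
    exact le_trans (Finset.card_le_card hsub) Finset.card_image_le
  show FinHypergraph.infectionNumberM H 1 = k
  unfold FinHypergraph.infectionNumberM
  refine le_antisymm ?_ (le_csInf ⟨W0.card, W0, hW0inf, rfl⟩ hlower)
  exact le_trans (Nat.sInf_le ⟨W0, hW0inf, rfl⟩) hW0card
end

section
/- Let H be a hypergraph whose edge set forms a symmetric 2-(k²−k+1, k, 1) design with k ≥ 3 (so every pair of vertices lies in exactly one edge, every edge has size k, and n = k²−k+1). Then I(H) = 3. -/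
/-- If the edges of `H` form a symmetric `2-(k²-k+1, k, 1)`
design with `k ≥ 3`, then `I(H) = 3`. -/
theorem infectionNumber_symmetric_design
    {α : Type*} [DecidableEq α] (H : FinHypergraph α) (k : ℕ) (hk : 3 ≤ k)
    (hV : H.verts.card = k ^ 2 - k + 1)
    (hsize : ∀ e ∈ H.edges, e.card = k)
    (hpair : ∀ u ∈ H.verts, ∀ v ∈ H.verts, u ≠ v →
      (H.edges.filter (fun e => u ∈ e ∧ v ∈ e)).card = 1) :
    H.infectionNumber = 3 := by
  classical
  have h3k : 3 * k ≤ k * k := Nat.mul_le_mul_right k hk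
  have hksq : k ^ 2 = k * k := sq k
  have hn : H.verts.card = k * k - k + 1 := by rw [hV, hksq]
  have hn7 : 7 ≤ H.verts.card := by omega
  -- uniqueness of the line through two points
  have huniq : ∀ u ∈ H.verts, ∀ v ∈ H.verts, u ≠ v → ∀ e ∈ H.edges, u ∈ e → v ∈ e →
      ∀ f ∈ H.edges, u ∈ f → v ∈ f → f = e := by
    intro u hu v hv huv e he hue hve f hf huf hvf
    have h1 := hpair u hu v hv huv
    have he' : e ∈ H.edges.filter (fun e => u ∈ e ∧ v ∈ e) :=
      Finset.mem_filter.mpr ⟨he, hue, hve⟩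
    have hf' : f ∈ H.edges.filter (fun e => u ∈ e ∧ v ∈ e) :=
      Finset.mem_filter.mpr ⟨hf, huf, hvf⟩
    exact Finset.card_le_one.mp (le_of_eq h1) f hf' e he'
  -- existence of the line through two points
  have hexists : ∀ u ∈ H.verts, ∀ v ∈ H.verts, u ≠ v →
      ∃ e ∈ H.edges, u ∈ e ∧ v ∈ e := by
    intro u hu v hv huv
    have h1 := hpair u hu v hv huv
    obtain ⟨e, he⟩ := Finset.card_pos.mp (by omega : 0 < (H.edges.filter (fun e => u ∈ e ∧ v ∈ e)).card)
    obtain ⟨he1, he2, he3⟩ := Finset.mem_filter.mp he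
    exact ⟨e, he1, he2, he3⟩
  -- LOWER BOUND: any infection set has size ≥ 3
  have hlb : ∀ W : Finset α, H.IsInfectionSetM 1 W → 3 ≤ W.card := by
    intro W hW
    by_contra hcon
    push_neg at hcon
    obtain ⟨W', hWW', hW'V, hW'2⟩ :=
      Finset.exists_subsuperset_card_eq hW.1 (by omega : W.card ≤ 2) (by omega)
    obtain ⟨a, b, hab, hW'ab⟩ := Finset.card_eq_two.mp hW'2
    have ha : a ∈ H.verts := hW'V (by simp [hW'ab])
    have hb : b ∈ H.verts := hW'V (by simp [hW'ab])
    obtain ⟨L, hL, haL, hbL⟩ := hexists a ha b hb hab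
    have hLsub : L ⊆ H.verts := H.edge_sub L hL
    have hLcard : L.card = k := hsize L hL
    -- every infected vertex lies in L
    have hinf : ∀ v, FinHypergraph.InfectedFromM H 1 W v → v ∈ L := by
      intro v hv
      induction hv with
      | @init v' h =>
        have hv' : v' ∈ W' := hWW' h
        rw [hW'ab] at hv'
        rcases Finset.mem_insert.mp hv' with h' | h'
        · exact h' ▸ haL
        · exact (Finset.mem_singleton.mp h') ▸ hbL
      | @spread A E v hcard hAE hE hAinf hblock hvE ihA ihB =>
        rcases Nat.lt_or_ge 1 A.card with h2 | h1
        · -- A has two points, both in L, so E = L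
          obtain ⟨x, hx, y, hy, hxy⟩ := Finset.one_lt_card.mp h2
          have hxL := ihA x hx
          have hyL := ihA y hy
          have hxV : x ∈ H.verts := hLsub hxL
          have hyV : y ∈ H.verts := hLsub hyL
          have hEL : E = L := huniq x hxV y hyV hxy L hL hxL hyL E hE (hAE hx) (hAE hy)
          exact hEL ▸ hvE
        · -- A = {x}: all of verts \ E is infected, hence in L, contradiction
          exfalso
          have hA1 : A.card = 1 := le_antisymm h1 hcard
          obtain ⟨x, hxA⟩ := Finset.card_eq_one.mp hA1
          have hxE : x ∈ E := hAE (by simp [hxA])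
          have hxV : x ∈ H.verts := H.edge_sub E hE hxE
          have hsub : H.verts \ E ⊆ L := by
            intro u hu
            obtain ⟨huV, huE⟩ := Finset.mem_sdiff.mp hu
            have hux : x ≠ u := fun h => huE (h ▸ hxE)
            obtain ⟨e, he, hxe, hue⟩ := hexists x hxV u huV hux
            refine ihB u huV huE ⟨e, he, ?_⟩
            rw [hxA]
            intro z hz
            rcases Finset.mem_union.mp hz with h' | h'
            · exact (Finset.mem_singleton.mp h') ▸ hxe
            · exact (Finset.mem_singleton.mp h') ▸ hue
          have hEV : E ⊆ H.verts := H.edge_sub E hE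
          have h1' : (H.verts \ E).card = H.verts.card - E.card :=
            Finset.card_sdiff_of_subset hEV
          have h2' : (H.verts \ E).card ≤ L.card := Finset.card_le_card hsub
          have hEk : E.card = k := hsize E hE
          rw [h1', hEk, hLcard, hn] at h2'
          omega
    have hVL : H.verts ⊆ L := fun v hv => hinf v (hW.2 v hv)
    have := Finset.card_le_card hVL
    omega
  -- UPPER BOUND: construct an infection set of size 3
  obtain ⟨x, hx, y, hy, hxy⟩ := Finset.one_lt_card.mp (by omega : 1 < H.verts.card)
  obtain ⟨L, hL, hxL, hyL⟩ := hexists x hx y hy hxy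
  have hLsub : L ⊆ H.verts := H.edge_sub L hL
  have hLcard : L.card = k := hsize L hL
  obtain ⟨a, haL, b, hbL, hab⟩ := Finset.one_lt_card.mp (by omega : 1 < L.card)
  have haV : a ∈ H.verts := hLsub haL
  have hbV : b ∈ H.verts := hLsub hbL
  have hnotsub : ¬ H.verts ⊆ L := by
    intro h
    have := Finset.card_le_card h
    omega
  obtain ⟨c, hcV, hcL⟩ := Finset.not_subset.mp hnotsub
  set W : Finset α := {a, b, c} with hWdef
  have hac : a ≠ c := fun h => hcL (h ▸ haL)
  have hbc : b ≠ c := fun h => hcL (h ▸ hbL)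
  have hWcard : W.card = 3 := by
    rw [hWdef, Finset.card_insert_of_notMem (by simp [hab, hac]),
        Finset.card_insert_of_notMem (by simp [hbc]), Finset.card_singleton]
  have haW : FinHypergraph.InfectedFromM H 1 W a := .init (by simp [hWdef])
  have hbW : FinHypergraph.InfectedFromM H 1 W b := .init (by simp [hWdef])
  have hcW : FinHypergraph.InfectedFromM H 1 W c := .init (by simp [hWdef])
  -- Step 1 : every vertex of L gets infected
  have step1 : ∀ p ∈ L, FinHypergraph.InfectedFromM H 1 W p := by
    intro p hp
    refine FinHypergraph.InfectedFromM.spread (A := {a, b}) (E := L) ?_ ?_ hL ?_ ?_ hp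
    · rw [Finset.card_insert_of_notMem (by simp [hab]), Finset.card_singleton]; omega
    · intro z hz
      rcases Finset.mem_insert.mp hz with h' | h'
      · exact h' ▸ haL
      · exact (Finset.mem_singleton.mp h') ▸ hbL
    · intro z hz
      rcases Finset.mem_insert.mp hz with h' | h'
      · exact h' ▸ haW
      · exact (Finset.mem_singleton.mp h') ▸ hbW
    · intro u huV huL hEx
      exfalso
      obtain ⟨E', hE', hsub⟩ := hEx
      have haE' : a ∈ E' := hsub (by simp)
      have hbE' : b ∈ E' := hsub (by simp)
      have : E' = L := huniq a haV b hbV hab L hL haL hbL E' hE' haE' hbE'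
      exact huL (this ▸ hsub (by simp))
  -- the lines through c and points of L cover everything
  have hlinec : ∀ p ∈ L, ∃ M ∈ H.edges, c ∈ M ∧ p ∈ M := by
    intro p hp
    exact hexists c hcV p (hLsub hp) (fun h => hcL (h ▸ hp))
  choose lf hlf1 hlf2 hlf3 using hlinec
  -- uniqueness consequence: any edge containing c and p (p ∈ L) equals lf p
  have hlfu : ∀ p (hp : p ∈ L), ∀ e ∈ H.edges, c ∈ e → p ∈ e → e = lf p hp := by
    intro p hp e he hce hpe
    exact huniq c hcV p (hLsub hp) (fun h => hcL (h ▸ hp)) (lf p hp) (hlf1 p hp)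
      (hlf2 p hp) (hlf3 p hp) e he hce hpe
  -- Step 2: every vertex is infected
  have step2 : ∀ v ∈ H.verts, FinHypergraph.InfectedFromM H 1 W v := by
    intro v hvV
    by_cases hvc : v = c
    · exact hvc ▸ hcW
    by_cases hvL : v ∈ L
    · exact step1 v hvL
    -- v ≠ c, v ∉ L; show v lies on some line lf p
    have hcover : ∃ p, ∃ hp : p ∈ L, v ∈ lf p hp := by
      by_contra hnc
      push_neg at hnc
      -- counting: the sets (lf p \ {c}) for p ∈ L are pairwise disjoint,
      -- each of size k-1, all inside verts \ {c, v}
      set T : Finset α := L.attach.biUnion (fun p => lf p.1 p.2 \ {c}) with hT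
      have hdisj : ∀ p ∈ L.attach, ∀ q ∈ L.attach, p ≠ q →
          Disjoint (lf p.1 p.2 \ {c}) (lf q.1 q.2 \ {c}) := by
        intro p _ q _ hpq
        rw [Finset.disjoint_left]
        intro z hzp hzq
        obtain ⟨hz1, hz2⟩ := Finset.mem_sdiff.mp hzp
        obtain ⟨hz3, _⟩ := Finset.mem_sdiff.mp hzq
        have hzc : z ≠ c := by simpa using hz2
        have hzV : z ∈ H.verts := H.edge_sub _ (hlf1 p.1 p.2) hz1
        -- lf p and lf q both contain c and z, so they are equal
        have heq : lf p.1 p.2 = lf q.1 q.2 := by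
          have h1 := huniq c hcV z hzV (Ne.symm hzc) (lf q.1 q.2) (hlf1 q.1 q.2)
            (hlf2 q.1 q.2) hz3 (lf p.1 p.2) (hlf1 p.1 p.2) (hlf2 p.1 p.2) hz1
          exact h1
        -- then lf p contains p.1 and q.1, distinct points of L, so lf p = L ∋ c, contra
        have hpq' : p.1 ≠ q.1 := fun h => hpq (Subtype.ext h)
        have hqin : q.1 ∈ lf p.1 p.2 := heq ▸ hlf3 q.1 q.2
        have : L = lf p.1 p.2 := huniq p.1 (hLsub p.2) q.1 (hLsub q.2) hpq'
          (lf p.1 p.2) (hlf1 p.1 p.2) (hlf3 p.1 p.2) hqin L hL p.2 q.2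
        exact hcL (this ▸ hlf2 p.1 p.2)
      have hTcard : T.card = k * (k - 1) := by
        rw [hT, Finset.card_biUnion hdisj]
        have : ∀ p ∈ L.attach, (lf p.1 p.2 \ {c}).card = k - 1 := by
          intro p _
          rw [Finset.sdiff_singleton_eq_erase, Finset.card_erase_of_mem (hlf2 p.1 p.2),
            hsize _ (hlf1 p.1 p.2)]
        rw [Finset.sum_congr rfl this, Finset.sum_const, Finset.card_attach, hLcard,
          smul_eq_mul]
      have hTsub : T ⊆ H.verts \ {c, v} := by
        intro z hz
        obtain ⟨p, _, hzp⟩ := Finset.mem_biUnion.mp hz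
        obtain ⟨hz1, hz2⟩ := Finset.mem_sdiff.mp hzp
        refine Finset.mem_sdiff.mpr ⟨H.edge_sub _ (hlf1 p.1 p.2) hz1, ?_⟩
        simp only [Finset.mem_insert, Finset.mem_singleton]
        push_neg
        refine ⟨by simpa using hz2, ?_⟩
        intro h
        exact hnc p.1 p.2 (h ▸ hz1)
      have hcvV : ({c, v} : Finset α) ⊆ H.verts := by
        intro z hz
        rcases Finset.mem_insert.mp hz with h | h
        · exact h ▸ hcV
        · exact (Finset.mem_singleton.mp h) ▸ hvV
      have hcv2 : ({c, v} : Finset α).card = 2 := by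
        rw [Finset.card_insert_of_notMem (by simp [Ne.symm hvc]), Finset.card_singleton]
      have h1' : (H.verts \ {c, v}).card = H.verts.card - 2 := by
        rw [Finset.card_sdiff_of_subset hcvV, hcv2]
      have := Finset.card_le_card hTsub
      rw [hTcard, h1', hn] at this
      have hmul : k * (k - 1) + k = k * k := by
        have h1 : k - 1 + 1 = k := by omega
        calc k * (k - 1) + k = k * ((k - 1) + 1) := by ring
          _ = k * k := by rw [h1]
      omega
    obtain ⟨p, hp, hvM⟩ := hcover
    -- infect via the line lf p through c and p
    have hcp : c ≠ p := fun h => hcL (h ▸ hp)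
    refine FinHypergraph.InfectedFromM.spread (A := {c, p}) (E := lf p hp) ?_ ?_ (hlf1 p hp) ?_ ?_ hvM
    · rw [Finset.card_insert_of_notMem (by simp [hcp]), Finset.card_singleton]; omega
    · intro z hz
      rcases Finset.mem_insert.mp hz with h' | h'
      · exact h' ▸ hlf2 p hp
      · exact (Finset.mem_singleton.mp h') ▸ hlf3 p hp
    · intro z hz
      rcases Finset.mem_insert.mp hz with h' | h'
      · exact h' ▸ hcW
      · exact (Finset.mem_singleton.mp h') ▸ step1 p hp
    · intro u huV huM hEx
      exfalso
      obtain ⟨E', hE', hsub⟩ := hEx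
      have hcE' : c ∈ E' := hsub (by simp)
      have hpE' : p ∈ E' := hsub (by simp)
      have : E' = lf p hp := hlfu p hp E' hE' hcE' hpE'
      exact huM (this ▸ hsub (by simp))
  have hWsub : W ⊆ H.verts := by
    intro z hz
    rw [hWdef] at hz
    rcases Finset.mem_insert.mp hz with h | h
    · exact h ▸ haV
    rcases Finset.mem_insert.mp h with h' | h'
    · exact h' ▸ hbV
    · exact (Finset.mem_singleton.mp h') ▸ hcV
  have hWinf : H.IsInfectionSetM 1 W := ⟨hWsub, step2⟩
  -- conclude
  have hmem : 3 ∈ {n | ∃ W : Finset α, H.IsInfectionSetM 1 W ∧ W.card = n} :=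
    ⟨W, hWinf, hWcard⟩
  unfold FinHypergraph.infectionNumber FinHypergraph.infectionNumberM
  refine le_antisymm (Nat.sInf_le hmem) ?_
  apply le_csInf ⟨3, hmem⟩
  rintro n ⟨W', hW', rfl⟩
  exact hlb W' hW'
end

section
/- Let H be a hypergraph whose edges form a t-(n,k,1) design, and let W be any set of vertices with derived set I_W (the set of all vertices infected by repeatedly applying the infection rule starting from W). Then the sub-hypergraph of H induced by I_W is either trivial (has no edges) or its edges form a t-(|I_W|, k, 1) design. -/
open Classical in
/-- The derived set of `W`: all vertices infected by repeatedly applying the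
infection rule starting from `W`. -/
noncomputable def FinHypergraph.derivedSet {α : Type*} [DecidableEq α]
    (H : FinHypergraph α) (W : Finset α) : Finset α :=
  H.verts.filter (fun v => H.InfectedFrom W v)

/-- If the edges of `H` form a `t-(n,k,1)` design, then for any
vertex set `W`, the sub-hypergraph induced by the derived set `I_W` either has
no edges or its edges form a `t-(|I_W|, k, 1)` design. -/
theorem induced_derivedSet_design
    {α : Type*} [DecidableEq α] (H : FinHypergraph α) (t n k : ℕ)
    (hV : H.verts.card = n)
    (hsize : ∀ e ∈ H.edges, e.card = k)
    (hdes : ∀ S ⊆ H.verts, S.card = t →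
      (H.edges.filter (fun e => S ⊆ e)).card = 1)
    (W : Finset α) (hW : W ⊆ H.verts) :
    (H.restrict (H.derivedSet W)).edges = ∅ ∨
      ∀ S ⊆ H.derivedSet W, S.card = t →
        ((H.restrict (H.derivedSet W)).edges.filter (fun e => S ⊆ e)).card = 1 := by
  classical
  by_cases hne : (H.restrict (H.derivedSet W)).edges = ∅
  · left; exact hne
  right
  intro S hS hScard
  have hSV : S ⊆ H.verts := hS.trans (Finset.filter_subset _ _)
  obtain ⟨E, hEfilt⟩ := Finset.card_eq_one.mp (hdes S hSV hScard)
  have hEmem : E ∈ H.edges.filter (fun e => S ⊆ e) := by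
    rw [hEfilt]; exact Finset.mem_singleton_self E
  have hE := Finset.mem_filter.mp hEmem
  have huniq : ∀ E' ∈ H.edges, S ⊆ E' → E' = E := by
    intro E' h1 h2
    have : E' ∈ H.edges.filter (fun e => S ⊆ e) := Finset.mem_filter.mpr ⟨h1, h2⟩
    rw [hEfilt] at this
    exact Finset.mem_singleton.mp this
  have hEsub : E ⊆ H.derivedSet W := by
    intro v hv
    refine Finset.mem_filter.mpr ⟨H.edge_sub E hE.1 hv, ?_⟩
    rcases Nat.eq_zero_or_pos t with ht | ht
    · obtain ⟨e, he⟩ := Finset.nonempty_iff_ne_empty.mpr hne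
      have he' := Finset.mem_filter.mp he
      have hSe : S ⊆ e := by
        have : S = ∅ := Finset.card_eq_zero.mp (by rw [hScard, ht])
        simp [this]
      have heE : e = E := huniq e he'.1 hSe
      have : v ∈ e := heE ▸ hv
      exact (Finset.mem_filter.mp (he'.2 this)).2
    · have hSinf : ∀ a ∈ S, H.InfectedFrom W a :=
        fun a ha => (Finset.mem_filter.mp (hS ha)).2
      refine FinHypergraph.InfectedFromM.spread (A := S) (by omega) hE.2 hE.1 hSinf
        (fun u hu hnE h => ?_) hv
      obtain ⟨E', hE'1, hE'2⟩ := h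
      have hSE' : S ⊆ E' := (Finset.subset_union_left).trans hE'2
      have huE' : u ∈ E' := hE'2 (Finset.mem_union_right _ (Finset.mem_singleton_self u))
      exact absurd (huniq E' hE'1 hSE' ▸ huE') hnE
  have : (H.restrict (H.derivedSet W)).edges.filter (fun e => S ⊆ e) = {E} := by
    apply Finset.eq_singleton_iff_unique_mem.mpr
    constructor
    · exact Finset.mem_filter.mpr ⟨Finset.mem_filter.mpr ⟨hE.1, hEsub⟩, hE.2⟩
    · intro x hx
      have hx' := Finset.mem_filter.mp hx
      exact huniq x (Finset.mem_filter.mp hx'.1).1 hx'.2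
  rw [this, Finset.card_singleton]
end
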